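/- Let p be a prime and G an abelian group in which every element has order a power of p. Let H = {x ∈ G : p•x = 0}. Then the inclusion H ↪ G induces a bijection ℙ(H) → ℙ(G), where ℙ denotes the quotient of nonzero elements by the equivalence relation generated by the common-divisor relation. -/

import Mathlib

/-- The common-divisor relation on nonzero elements of an abelian group
(as a `ℤ`-module). -/
def relCD {G : Type*} [AddCommGroup G] (x y : {g : G // g ≠ 0}) : Prop :=
  ∃ (g : G) (r s : ℤ), (x : G) = r • g ∧ (y : G) = s • g

/-- The projective space of an abelian group. -/
def ProjSp (G : Type*) [AddCommGroup G] := Quot (relCD (G := G))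

/-- The subgroup of elements killed by `p`. -/
def pTors (p : ℕ) (G : Type*) [AddCommGroup G] : AddSubgroup G where
  carrier := {x | p • x = 0}
  zero_mem' := by simp
  add_mem' := by intro a b ha hb; simp only [Set.mem_setOf_eq, smul_add] at *;
                 rw [ha, hb, add_zero]
  neg_mem' := by intro a ha; simp only [Set.mem_setOf_eq, smul_neg] at *;
                 rw [ha, neg_zero]

lemma zsmul_pow_eq {G : Type*} [AddCommGroup G] (p k : ℕ) (x : G) :
    ((p : ℤ) ^ k) • x = p ^ k • x := by
  rw [← Nat.cast_pow, natCast_zsmul]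

/-- Factor out the largest power of `p` from a nonzero integer. -/
lemma int_fact {p : ℕ} (hp : p.Prime) (r : ℤ) (hr : r ≠ 0) :
    ∃ (v : ℕ) (u : ℤ), ¬((p : ℤ) ∣ u) ∧ r = (p : ℤ) ^ v * u := by
  obtain ⟨e, m, hm, h⟩ :=
    Nat.exists_eq_pow_mul_and_not_dvd (Int.natAbs_ne_zero.mpr hr) p hp.ne_one
  refine ⟨e, Int.sign r * m, ?_, ?_⟩
  · intro hd
    apply hm
    have h1 : (p : ℤ) ∣ (m : ℤ) := by
      have h2 := Int.natAbs_dvd_natAbs.mpr hd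
      simpa [Int.natAbs_mul, Int.natAbs_sign_of_ne_zero hr] using
        Int.natCast_dvd_natCast.mpr h2
    exact_mod_cast h1
  · have h3 := Int.sign_mul_natAbs r
    rw [h] at h3
    push_cast at h3
    linarith [h3]

/-- The key lemma: if `x = r • g` is nonzero with exact order exponent `k`, and `g`
has exact order exponent `m`, then `p^(k-1) • x` is a multiple of `p^(m-1) • g`. -/
lemma key_lemma {G : Type*} [AddCommGroup G] {p : ℕ} (hp : p.Prime)
    (g : G) (m : ℕ) (hm : ((p : ℤ) ^ m) • g = 0)
    (r : ℤ) (k : ℕ) (hk : ((p : ℤ) ^ k) • (r • g) = 0)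
    (hmmin : ∀ j < m, ((p : ℤ) ^ j) • g ≠ 0)
    (hx : r • g ≠ 0) :
    ∃ t : ℤ, ((p : ℤ) ^ (k - 1)) • (r • g) = t • (((p : ℤ) ^ (m - 1)) • g) := by
  have hr : r ≠ 0 := by rintro rfl; simp at hx
  obtain ⟨v, u, hu, hru⟩ := int_fact hp r hr
  have hk1 : 1 ≤ k := by
    rcases Nat.eq_zero_or_pos k with h | h
    · exfalso; apply hx; simpa [h] using hk
    · exact h
  have hge : ∀ j, m ≤ j → ((p : ℤ) ^ j) • g = 0 := by
    intro j hj
    obtain ⟨c, rfl⟩ := Nat.exists_eq_add_of_le hj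
    rw [pow_add, mul_comm, mul_smul, hm, smul_zero]
  -- claim : m ≤ k + v
  have hkvm : m ≤ k + v := by
    by_contra hlt
    push_neg at hlt
    have hprime : Prime ((p : ℤ)) := by
      rw [Int.prime_iff_natAbs_prime]; simpa
    have hco : IsCoprime ((p : ℤ) ^ m) u :=
      IsCoprime.pow_left (hprime.coprime_iff_not_dvd.mpr hu)
    obtain ⟨a, b, hab⟩ := hco
    apply hmmin (k + v) hlt
    have h2 : ((p : ℤ) ^ (k + v) * u) • g = 0 := by
      have h3 : ((p : ℤ) ^ k * r) • g = 0 := by rw [mul_smul]; exact hk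
      rw [hru] at h3
      rw [← h3]
      ring_nf
    have h4 : ((p : ℤ) ^ (k + v)) • g
        = (a * ((p : ℤ) ^ m * (p : ℤ) ^ (k + v)) + b * ((p : ℤ) ^ (k + v) * u)) • g := by
      rw [show a * ((p : ℤ) ^ m * (p : ℤ) ^ (k + v)) + b * ((p : ℤ) ^ (k + v) * u)
            = (a * (p : ℤ) ^ m + b * u) * (p : ℤ) ^ (k + v) by ring, hab, one_mul]
    have hA : (a * ((p : ℤ) ^ m * (p : ℤ) ^ (k + v))) • g = 0 := by
      have h5 : ((p : ℤ) ^ m * (p : ℤ) ^ (k + v)) • g = 0 := by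
        rw [← pow_add]
        exact hge _ (by omega)
      rw [mul_smul, h5, smul_zero]
    have hB : (b * ((p : ℤ) ^ (k + v) * u)) • g = 0 := by
      rw [mul_smul, h2, smul_zero]
    rw [h4, add_smul, hA, hB, add_zero]
  set d := (k - 1) + v - (m - 1) with hd
  refine ⟨(p : ℤ) ^ d * u, ?_⟩
  rw [smul_smul, smul_smul, hru]
  have h6 : (p : ℤ) ^ (k - 1) * ((p : ℤ) ^ v * u) = (p : ℤ) ^ ((k - 1) + v) * u := by
    rw [pow_add]; ring
  have h7 : (p : ℤ) ^ d * u * (p : ℤ) ^ (m - 1) = (p : ℤ) ^ (d + (m - 1)) * u := by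
    rw [pow_add]; ring
  rw [h6, h7, show (k - 1) + v = d + (m - 1) by omega]

theorem stmt_7 {G : Type*} [AddCommGroup G] (p : ℕ) (hp : p.Prime)
    (hG : ∀ x : G, ∃ k : ℕ, p ^ k • x = 0) :
    ∃ F : ProjSp (pTors p G) → ProjSp G,
      Function.Bijective F ∧
      ∀ (x : pTors p G) (hx : x ≠ 0),
        F (Quot.mk _ ⟨x, hx⟩) =
          Quot.mk _ ⟨(x : G), by simpa using hx⟩ := by
  classical
  set k : G → ℕ := fun x => Nat.find (hG x) with hkdef
  have hk0 : ∀ x : G, ((p : ℤ) ^ (k x)) • x = 0 := fun x => by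
    rw [zsmul_pow_eq]; exact Nat.find_spec (hG x)
  have hkmin : ∀ x : G, ∀ j < k x, ((p : ℤ) ^ j) • x ≠ 0 := fun x j hj => by
    rw [zsmul_pow_eq]; exact Nat.find_min (hG x) hj
  have hk1 : ∀ x : G, x ≠ 0 → 1 ≤ k x := by
    intro x hx
    rcases Nat.eq_zero_or_pos (k x) with h | h
    · exfalso; apply hx; simpa [h] using hk0 x
    · exact h
  have memH : ∀ x : G, x ≠ 0 → ((p : ℤ) ^ (k x - 1)) • x ∈ pTors p G := by
    intro x hx
    show p • (((p : ℤ) ^ (k x - 1)) • x) = 0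
    have : p • (((p : ℤ) ^ (k x - 1)) • x) = ((p : ℤ) * (p : ℤ) ^ (k x - 1)) • x := by
      rw [mul_smul, natCast_zsmul]
    rw [this, ← pow_succ']
    have h1 := hk1 x hx
    rw [show k x - 1 + 1 = k x by omega]
    exact hk0 x
  have neH : ∀ x : G, x ≠ 0 → ((p : ℤ) ^ (k x - 1)) • x ≠ 0 := by
    intro x hx
    exact hkmin x (k x - 1) (by have := hk1 x hx; omega)
  -- the reduction map
  set red : {g : G // g ≠ 0} → {h : pTors p G // h ≠ 0} := fun x =>
    ⟨⟨((p : ℤ) ^ (k (x : G) - 1)) • (x : G), memH _ x.2⟩, by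
      intro h
      exact neH _ x.2 (by simpa using congrArg Subtype.val h)⟩ with hred
  -- F : the inclusion-induced map
  set F : ProjSp (pTors p G) → ProjSp G :=
    Quot.lift
      (fun x : {h : pTors p G // h ≠ 0} =>
        Quot.mk (relCD (G := G)) ⟨((x : pTors p G) : G), by
          simpa [ZeroMemClass.coe_eq_zero] using x.2⟩)
      (by
        rintro x y ⟨g, r, s, hx, hy⟩
        apply Quot.sound
        refine ⟨(g : G), r, s, ?_, ?_⟩
        · exact_mod_cast congrArg (Subtype.val) hx
        · exact_mod_cast congrArg (Subtype.val) hy) with hF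
  -- Rbar : the reduction-induced inverse map
  have redsound : ∀ x y : {g : G // g ≠ 0}, relCD x y →
      Quot.mk (relCD (G := pTors p G)) (red x) = Quot.mk (relCD (G := pTors p G)) (red y) := by
    rintro x y ⟨g, r, s, hx, hy⟩
    have hg0 : g ≠ 0 := by rintro rfl; exact x.2 (by simpa using hx)
    obtain ⟨t, ht⟩ : ∃ t : ℤ, ((p : ℤ) ^ (k (x : G) - 1)) • (x : G)
        = t • (((p : ℤ) ^ (k g - 1)) • g) := by
      rw [hx]
      exact key_lemma hp g (k g) (hk0 g) r (k (r • g)) (hk0 _) (hkmin g) (hx ▸ x.2)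
    obtain ⟨t', ht'⟩ : ∃ t' : ℤ, ((p : ℤ) ^ (k (y : G) - 1)) • (y : G)
        = t' • (((p : ℤ) ^ (k g - 1)) • g) := by
      rw [hy]
      exact key_lemma hp g (k g) (hk0 g) s (k (s • g)) (hk0 _) (hkmin g) (hy ▸ y.2)
    apply Quot.sound
    refine ⟨⟨((p : ℤ) ^ (k g - 1)) • g, memH g hg0⟩, t, t', ?_, ?_⟩
    · apply Subtype.ext
      push_cast
      exact ht
    · apply Subtype.ext
      push_cast
      exact ht'
  set Rbar : ProjSp G → ProjSp (pTors p G) :=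
    Quot.lift (fun x => Quot.mk (relCD (G := pTors p G)) (red x)) redsound with hRbar
  have hleft : ∀ q, Rbar (F q) = q := by
    apply Quot.ind
    intro x
    have hxval : ((x : pTors p G) : G) ≠ 0 := by
      simpa [ZeroMemClass.coe_eq_zero] using x.2
    rw [hRbar, hF]
    have hstep : (Quot.lift (fun x => Quot.mk (relCD (G := pTors p G)) (red x)) redsound)
        ((Quot.lift
          (fun x : {h : pTors p G // h ≠ 0} =>
            Quot.mk (relCD (G := G)) ⟨((x : pTors p G) : G), by
              simpa [ZeroMemClass.coe_eq_zero] using x.2⟩)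
          (by
            rintro x y ⟨g, r, s, hx, hy⟩
            apply Quot.sound
            refine ⟨(g : G), r, s, ?_, ?_⟩
            · exact_mod_cast congrArg (Subtype.val) hx
            · exact_mod_cast congrArg (Subtype.val) hy)) (Quot.mk relCD x))
        = Quot.mk (relCD (G := pTors p G)) (red ⟨((x : pTors p G) : G), hxval⟩) := rfl
    rw [hstep]
    have hkx : k ((x : pTors p G) : G) = 1 := by
      have hle : k ((x : pTors p G) : G) ≤ 1 := by
        apply Nat.find_le
        have := (x : pTors p G).2
        simpa [pow_one] using (show p • ((x : pTors p G) : G) = 0 from this)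
      have := hk1 _ hxval
      omega
    congr 1
    apply Subtype.ext
    apply Subtype.ext
    show ((p : ℤ) ^ (k ((x : pTors p G) : G) - 1)) • ((x : pTors p G) : G)
        = ((x : pTors p G) : G)
    rw [hkx]
    simp
  have hright : ∀ q, F (Rbar q) = q := by
    apply Quot.ind
    intro x
    rw [hRbar, hF]
    apply Quot.sound
    exact ⟨(x : G), (p : ℤ) ^ (k (x : G) - 1), 1, rfl, (one_smul ℤ _).symm⟩
  refine ⟨F, ⟨?_, ?_⟩, ?_⟩
  · exact Function.LeftInverse.injective hleft
  · exact Function.RightInverse.surjective hright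
  · intro x hx
    rfl
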